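/- Exhibit a discrimination game where an optimal protocol is not semantically consistent: let X be uniform on the 12-point set {±1, …, ±6} ⊂ ℝ and M = {1,…,6}. The sender S̃ mapping both i and −i to message i achieves the global minimum of the single-distractor discrimination objective ∑_m P(S(X)=m)² (value 1/6, attained by any 2-to-1 uniform mapping), yet S̃ satisfies E[‖X1 − X2‖² | S̃(X1) = S̃(X2)] = E[‖X1 − X2‖²], i.e., S̃ is not semantically consistent. -/

import Mathlib

/-- The 12-point input space `{±1, …, ±6} ⊂ ℝ`: the pair `(i, b)` encodes the
real number `±(i+1)` with sign given by `b`. -/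
noncomputable def val (s : Fin 6 × Bool) : ℝ :=
  (if s.2 then (1 : ℝ) else -1) * ((s.1 : ℝ) + 1)

/-- The sender mapping both `i` and `−i` to message `i`. -/
def Stil (s : Fin 6 × Bool) : Fin 6 := s.1

/-- A discrimination game whose optimal protocol is not semantically consistent:
for `X` uniform on `{±1,…,±6}` and `M = {1,…,6}`, the sender `S̃` mapping `±i ↦ i`
attains the global minimum `1/6` of the single-distractor objective `∑_m P(S(X)=m)²`
(any sender being bounded below by `1/6`), yet the expected squared distance of two
independent copies conditioned on equal messages equals the unconditional one, so
`S̃` is not semantically consistent. -/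
theorem disc_optimal_not_semantically_consistent :
    (∑ m : Fin 6,
        (((Finset.univ.filter fun s : Fin 6 × Bool => Stil s = m).card : ℝ) / 12) ^ 2
      = 1 / 6) ∧
    (∀ S' : Fin 6 × Bool → Fin 6,
      1 / 6 ≤ ∑ m : Fin 6,
        (((Finset.univ.filter fun s : Fin 6 × Bool => S' s = m).card : ℝ) / 12) ^ 2) ∧
    ((∑ s1 : Fin 6 × Bool, ∑ s2 : Fin 6 × Bool,
        if Stil s1 = Stil s2 then (val s1 - val s2) ^ 2 else 0) /
      (∑ s1 : Fin 6 × Bool, ∑ s2 : Fin 6 × Bool,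
        if Stil s1 = Stil s2 then (1 : ℝ) else 0)
      = (∑ s1 : Fin 6 × Bool, ∑ s2 : Fin 6 × Bool, (val s1 - val s2) ^ 2) / 144) := by
  refine ⟨?_, ?_, ?_⟩
  · have h : ∀ m : Fin 6, (Finset.univ.filter fun s : Fin 6 × Bool => Stil s = m).card = 2 := by
      decide
    simp only [h]
    norm_num [Fin.sum_univ_six]
  · intro S'
    have hsum : ∑ m : Fin 6,
        (((Finset.univ.filter fun s : Fin 6 × Bool => S' s = m).card : ℝ) / 12) = 1 := by
      rw [← Finset.sum_div]
      rw [show ∑ m : Fin 6, ((Finset.univ.filter fun s : Fin 6 × Bool => S' s = m).card : ℝ)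
          = ((∑ m : Fin 6, (Finset.univ.filter fun s : Fin 6 × Bool => S' s = m).card : ℕ) : ℝ)
        by push_cast; ring]
      rw [← Finset.card_eq_sum_card_fiberwise (f := S') (by intro x _; exact Finset.mem_univ _)]
      norm_num
    have key := sq_sum_le_card_mul_sum_sq
      (s := (Finset.univ : Finset (Fin 6)))
      (f := fun m => ((Finset.univ.filter fun s : Fin 6 × Bool => S' s = m).card : ℝ) / 12)
    rw [hsum] at key
    simp only [Finset.card_univ, Fintype.card_fin] at key
    nlinarith [key]
  · have h3 : ((3 : Fin 6) : ℕ) = 3 := rfl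
    have h4 : ((4 : Fin 6) : ℕ) = 4 := rfl
    have h5 : ((5 : Fin 6) : ℕ) = 5 := rfl
    have hc : ∀ m : Fin 6, (Finset.univ.filter fun x : Fin 6 × Bool => m = x.1).card = 2 := by
      decide
    norm_num [Fintype.sum_prod_type, Fin.sum_univ_six, Stil, val, h3, h4, h5, hc]
    norm_num [Fin.ext_iff]
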